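/- Let A be a symmetric positive definite K×K matrix with eigenvalues λ₁ ≥ … ≥ λ_K. For each k, define b_k = 1/[A⁻¹]_{kk}, where [A⁻¹]_{kk} is the k-th diagonal entry of A⁻¹. Then min_k b_k ≥ λ_K, and there exists a constant C ∈ (0,1] depending only on K (one may take C = 1/K) such that min_k b_k ≤ λ_K / C. -/

import Mathlib

open Matrix Finset

/-- For a symmetric positive definite K×K matrix A with smallest eigenvalue
λ_K, setting b_k = 1/[A⁻¹]_{kk}, we have min_k b_k ≥ λ_K and min_k b_k ≤ λ_K·K
(i.e. min_k b_k ≤ λ_K / C with C = 1/K). -/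
theorem stmt9 {K : ℕ} [NeZero K] (A : Matrix (Fin K) (Fin K) ℝ) (hA : A.PosDef) :
    (⨅ i, hA.1.eigenvalues i) ≤ (⨅ k, 1 / (A⁻¹ k k)) ∧
    (⨅ k, 1 / (A⁻¹ k k)) ≤ (⨅ i, hA.1.eigenvalues i) * K := by
  set ev := hA.1.eigenvalues with hev
  set U : Matrix (Fin K) (Fin K) ℝ := (hA.1.eigenvectorUnitary : Matrix (Fin K) (Fin K) ℝ) with hU
  have hevpos : ∀ i, 0 < ev i := hA.eigenvalues_pos
  have hU1 : star U * U = 1 := (Matrix.mem_unitaryGroup_iff').mp hA.1.eigenvectorUnitary.2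
  have hU2 : U * star U = 1 := (Matrix.mem_unitaryGroup_iff).mp hA.1.eigenvectorUnitary.2
  -- inverse formula
  have hinv : A⁻¹ = U * diagonal (fun i => (ev i)⁻¹) * star U := by
    apply inv_eq_right_inv
    calc A * (U * diagonal (fun i => (ev i)⁻¹) * star U)
        = (U * diagonal (RCLike.ofReal ∘ ev) * star U) *
          (U * diagonal (fun i => (ev i)⁻¹) * star U) := by
          exact congrArg (· * (U * diagonal (fun i => (ev i)⁻¹) * star U)) hA.1.spectral_theorem
      _ = U * (diagonal (RCLike.ofReal ∘ ev) * ((star U * U) *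
            (diagonal (fun i => (ev i)⁻¹) * star U))) := by
          simp only [Matrix.mul_assoc]
      _ = 1 := by
          rw [hU1, Matrix.one_mul, ← Matrix.mul_assoc (diagonal _), diagonal_mul_diagonal]
          have : (fun i => (RCLike.ofReal ∘ ev) i * (ev i)⁻¹) = fun _ => (1:ℝ) := by
            funext i
            simp [mul_inv_cancel₀ (hevpos i).ne']
          rw [this, diagonal_one, Matrix.one_mul, hU2]
  have hentry : ∀ k l, A⁻¹ k l = ∑ i, U k i * U l i * (ev i)⁻¹ := by
    intro k l
    rw [hinv]
    simp only [mul_apply, diagonal_apply, mul_ite, mul_zero, ite_mul, zero_mul,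
      Finset.sum_ite_eq, Finset.sum_ite_eq', Finset.mem_univ, if_true,
      star_apply, star_trivial]
    exact Finset.sum_congr rfl fun i _ => by ring
  -- row and column norms
  have hrow : ∀ k, ∑ i, U k i * U k i = 1 := by
    intro k
    have := congrFun (congrFun hU2 k) k
    simpa [mul_apply, eq_comm] using this
  have hcol : ∀ i, ∑ k, U k i * U k i = 1 := by
    intro i
    have := congrFun (congrFun hU1 i) i
    simpa [mul_apply, eq_comm] using this
  obtain ⟨i₀, hi₀⟩ := Finite.exists_min ev
  have hmu : (⨅ i, ev i) = ev i₀ := le_antisymm (ciInf_le (Finite.bddBelow_range _) i₀)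
    (le_ciInf hi₀)
  set μ := ev i₀ with hμdef
  have hμpos : 0 < μ := hevpos i₀
  have hdiagpos : ∀ k, 0 < A⁻¹ k k := by
    intro k
    exact hA.inv.diag_pos
  have hdiag_le : ∀ k, A⁻¹ k k ≤ μ⁻¹ := by
    intro k
    rw [hentry]
    calc ∑ i, U k i * U k i * (ev i)⁻¹ ≤ ∑ i, U k i * U k i * μ⁻¹ := by
          refine Finset.sum_le_sum fun i _ => ?_
          exact mul_le_mul_of_nonneg_left (inv_anti₀ hμpos (hi₀ i)) (mul_self_nonneg _)
      _ = μ⁻¹ := by rw [← Finset.sum_mul, hrow, one_mul]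
  constructor
  · rw [hmu]
    refine le_ciInf fun k => ?_
    rw [le_div_iff₀ (hdiagpos k)]
    calc μ * A⁻¹ k k ≤ μ * μ⁻¹ := mul_le_mul_of_nonneg_left (hdiag_le k) hμpos.le
      _ = 1 := mul_inv_cancel₀ hμpos.ne'
  · have htr : (μ⁻¹ : ℝ) ≤ ∑ k, A⁻¹ k k := by
      have hsum : ∑ k, A⁻¹ k k = ∑ i, (ev i)⁻¹ := by
        simp only [hentry]
        rw [Finset.sum_comm]
        refine Finset.sum_congr rfl fun i _ => ?_
        rw [← Finset.sum_mul, hcol, one_mul]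
      rw [hsum]
      exact Finset.single_le_sum (fun i _ => (inv_nonneg).mpr (hevpos i).le)
        (Finset.mem_univ i₀)
    have hK : (0:ℝ) < K := by exact_mod_cast Nat.pos_of_ne_zero (NeZero.ne K)
    obtain ⟨k, hk⟩ : ∃ k, μ⁻¹ / K ≤ A⁻¹ k k := by
      by_contra h
      push_neg at h
      have hlt : ∑ k, A⁻¹ k k < ∑ _k : Fin K, μ⁻¹ / K :=
        Finset.sum_lt_sum_of_nonempty Finset.univ_nonempty (fun k _ => h k)
      simp only [Finset.sum_const, Finset.card_univ, Fintype.card_fin, nsmul_eq_mul] at hlt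
      rw [mul_div_cancel₀ _ hK.ne'] at hlt
      linarith
    rw [hmu]
    refine le_trans (ciInf_le (Finite.bddBelow_range _) k) ?_
    rw [div_le_iff₀ (hdiagpos k)]
    calc (1:ℝ) = μ * K * (μ⁻¹ / K) := by field_simp
      _ ≤ μ * K * A⁻¹ k k := mul_le_mul_of_nonneg_left hk (by positivity)
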